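/- An inverse semigroup that is finitely generated and admits an idempotent-pure morphism onto a finite inverse semigroup is itself finite. -/

import Mathlib

/-- A semigroup is inverse if every element has a unique inverse. -/
def IsInverseSemigroup (S : Type*) [Semigroup S] : Prop :=
  ∀ x : S, ∃! y : S, x * y * x = x ∧ y * x * y = y

namespace InvSgAux

variable {I : Type*} [Semigroup I]

noncomputable def sv (hI : IsInverseSemigroup I) (a : I) : I := (hI a).exists.choose

lemma sv1 (hI : IsInverseSemigroup I) (a : I) : a * sv hI a * a = a := (hI a).exists.choose_spec.1

lemma sv2 (hI : IsInverseSemigroup I) (a : I) : sv hI a * a * sv hI a = sv hI a := (hI a).exists.choose_spec.2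

lemma sv_unique (hI : IsInverseSemigroup I) {a y : I} (h1 : a * y * a = a) (h2 : y * a * y = y) : y = sv hI a :=
  (hI a).unique ⟨h1, h2⟩ ⟨sv1 hI a, sv2 hI a⟩

lemma sv_sv (hI : IsInverseSemigroup I) (a : I) : sv hI (sv hI a) = a :=
  (sv_unique hI (sv2 hI a) (sv1 hI a)).symm

lemma idem_sv (hI : IsInverseSemigroup I) {e : I} (he : e * e = e) : sv hI e = e :=
  (sv_unique hI (by rw [he, he]) (by rw [he, he])).symm

/-- r a = a * a⁻¹ is idempotent. -/
lemma r_idem (hI : IsInverseSemigroup I) (a : I) : (a * sv hI a) * (a * sv hI a) = a * sv hI a := by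
  have h := congrArg (· * sv hI a) (sv1 hI a)
  simpa [mul_assoc] using h

/-- d a = a⁻¹ * a is idempotent. -/
lemma d_idem (hI : IsInverseSemigroup I) (a : I) : (sv hI a * a) * (sv hI a * a) = sv hI a * a := by
  have h := congrArg (· * a) (sv2 hI a)
  simpa [mul_assoc] using h

/-- products of idempotents are idempotent, and the inverse of e*f is f*(sv(e*f))*e. -/
lemma idem_mul_idem (hI : IsInverseSemigroup I) {e f : I} (he : e * e = e) (hf : f * f = f) :
    (e * f) * (e * f) = e * f := by
  set x := sv hI (e * f) with hxdef
  have hx1 : (e * f) * x * (e * f) = e * f := sv1 hI (e * f)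
  have hx2 : x * (e * f) * x = x := sv2 hI (e * f)
  -- extended forms
  have he' : ∀ X : I, e * (e * X) = e * X := fun X => by rw [← mul_assoc, he]
  have hf' : ∀ X : I, f * (f * X) = f * X := fun X => by rw [← mul_assoc, hf]
  have hx2' : ∀ X : I, x * (e * (f * (x * X))) = x * X := fun X => by
    have := congrArg (· * X) hx2
    simpa [mul_assoc] using this
  have h1 : (e * f) * (f * x * e) * (e * f) = e * f := by
    have hx1' : e * (f * (x * (e * f))) = e * f := by simpa [mul_assoc] using hx1
    simp only [mul_assoc]
    rw [hf', he']
    simpa [mul_assoc] using hx1'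
  have h2 : (f * x * e) * (e * f) * (f * x * e) = f * x * e := by
    simp only [mul_assoc]
    rw [he', hf']
    have := hx2' e
    rw [this]
  have h3 : (f * x * e) * (f * x * e) = f * x * e := by
    simp only [mul_assoc]
    have := hx2' e
    rw [this]
  have hfxe : f * x * e = x := sv_unique hI h1 h2
  have hxx : x * x = x := by rw [← hfxe]; exact h3
  -- e*f is an inverse of x, and so is x itself; uniqueness gives e*f = x
  have hef : e * f = x := by
    have := sv_unique hI (a := x) (y := e * f) hx2 hx1
    rw [idem_sv hI hxx] at this
    exact this
  rw [hef]; exact hxx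

lemma idem_comm (hI : IsInverseSemigroup I) {e f : I} (he : e * e = e) (hf : f * f = f) :
    e * f = f * e := by
  have hef : (e * f) * (e * f) = e * f := idem_mul_idem hI he hf
  have hfe : (f * e) * (f * e) = f * e := idem_mul_idem hI hf he
  have he' : ∀ X : I, e * (e * X) = e * X := fun X => by rw [← mul_assoc, he]
  have hf' : ∀ X : I, f * (f * X) = f * X := fun X => by rw [← mul_assoc, hf]
  have h1 : (e * f) * (f * e) * (e * f) = e * f := by
    simp only [mul_assoc]
    rw [hf', he']
    simpa [mul_assoc] using hef
  have h2 : (f * e) * (e * f) * (f * e) = f * e := by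
    simp only [mul_assoc]
    rw [he', hf']
    simpa [mul_assoc] using hfe
  have h3 := sv_unique hI h1 h2
  have h4 := idem_sv hI hef
  rw [h4] at h3
  exact h3.symm

lemma sv_mul (hI : IsInverseSemigroup I) (a b : I) : sv hI (a * b) = sv hI b * sv hI a := by
  have he : (b * sv hI b) * (b * sv hI b) = b * sv hI b := r_idem hI b
  have hfid : (sv hI a * a) * (sv hI a * a) = sv hI a * a := d_idem hI a
  have hcomm := idem_comm hI he hfid
  -- h1 : (a*b) * (sv b * sv a) * (a*b) = a*b
  have h1 : (a * b) * (sv hI b * sv hI a) * (a * b) = a * b := by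
    have key : b * (sv hI b * (sv hI a * (a * b))) = sv hI a * (a * (b * (sv hI b * b))) := by
      have := congrArg (· * b) hcomm
      simpa [mul_assoc] using this
    have hb : b * (sv hI b * b) = b := by
      have := sv1 hI b; simpa [mul_assoc] using this
    have ha : ∀ X : I, a * (sv hI a * (a * X)) = a * X := fun X => by
      have := congrArg (· * X) (sv1 hI a)
      simpa [mul_assoc] using this
    calc (a * b) * (sv hI b * sv hI a) * (a * b)
        = a * (b * (sv hI b * (sv hI a * (a * b)))) := by simp only [mul_assoc]
      _ = a * (sv hI a * (a * (b * (sv hI b * b)))) := by rw [key]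
      _ = a * (b * (sv hI b * b)) := ha _
      _ = a * b := by rw [hb]
  have h2 : (sv hI b * sv hI a) * (a * b) * (sv hI b * sv hI a) = sv hI b * sv hI a := by
    have key : sv hI a * (a * (b * (sv hI b * sv hI a))) = b * (sv hI b * (sv hI a * (a * sv hI a))) := by
      have := congrArg (· * sv hI a) hcomm.symm
      simpa [mul_assoc] using this
    have ha : sv hI a * (a * sv hI a) = sv hI a := by
      have := sv2 hI a; simpa [mul_assoc] using this
    have hb : ∀ X : I, sv hI b * (b * (sv hI b * X)) = sv hI b * X := fun X => by
      have := congrArg (· * X) (sv2 hI b)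
      simpa [mul_assoc] using this
    calc (sv hI b * sv hI a) * (a * b) * (sv hI b * sv hI a)
        = sv hI b * (sv hI a * (a * (b * (sv hI b * sv hI a)))) := by simp only [mul_assoc]
      _ = sv hI b * (b * (sv hI b * (sv hI a * (a * sv hI a)))) := by rw [key]
      _ = sv hI b * (b * (sv hI b * sv hI a)) := by rw [ha]
      _ = sv hI b * sv hI a := hb _
  exact (sv_unique hI h1 h2).symm

/-- transitivity of ≤ (x ≤ y written as x*y = x). -/
lemma le_trans' {x y z : I} (h1 : x * y = x) (h2 : y * z = y) : x * z = x := by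
  calc x * z = (x * y) * z := by rw [h1]
    _ = x * (y * z) := by rw [mul_assoc]
    _ = x * y := by rw [h2]
    _ = x := h1

/-- conjugate of an idempotent is below the range: (w*(x*sv w)) * (w*sv w) = w*(x*sv w). -/
lemma conj_le_r (hI : IsInverseSemigroup I) {w x : I} (hx : x * x = x) :
    (w * (x * sv hI w)) * (w * sv hI w) = w * (x * sv hI w) := by
  have hd : (sv hI w * w) * (sv hI w * w) = sv hI w * w := d_idem hI w
  have hcomm := idem_comm hI hx hd
  have key : x * (sv hI w * (w * sv hI w)) = sv hI w * (w * (x * sv hI w)) := by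
    have := congrArg (· * sv hI w) hcomm
    simpa [mul_assoc] using this
  have hw : ∀ X : I, w * (sv hI w * (w * X)) = w * X := fun X => by
    have := congrArg (· * X) (sv1 hI w)
    simpa [mul_assoc] using this
  calc (w * (x * sv hI w)) * (w * sv hI w)
      = w * (x * (sv hI w * (w * sv hI w))) := by simp only [mul_assoc]
    _ = w * (sv hI w * (w * (x * sv hI w))) := by rw [key]
    _ = w * (x * sv hI w) := hw _

/-- conjugate of an idempotent below the domain is idempotent. -/
lemma conj_idem (hI : IsInverseSemigroup I) {w e : I} (he : e * e = e) (hed : e * (sv hI w * w) = e) :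
    (w * (e * sv hI w)) * (w * (e * sv hI w)) = w * (e * sv hI w) := by
  have hd : (sv hI w * w) * (sv hI w * w) = sv hI w * w := d_idem hI w
  have hcomm := idem_comm hI he hd
  -- e * (sv w * w) = e  and comm
  have key : e * (sv hI w * (w * (e * sv hI w))) = e * (e * sv hI w) := by
    calc e * (sv hI w * (w * (e * sv hI w)))
        = (e * (sv hI w * w)) * (e * sv hI w) := by simp only [mul_assoc]
      _ = e * (e * sv hI w) := by rw [hed]
  calc (w * (e * sv hI w)) * (w * (e * sv hI w))
      = w * (e * (sv hI w * (w * (e * sv hI w)))) := by simp only [mul_assoc]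
    _ = w * (e * (e * sv hI w)) := by rw [key]
    _ = w * ((e * e) * sv hI w) := by simp only [mul_assoc]
    _ = w * (e * sv hI w) := by rw [he]

end InvSgAux

namespace InvSgAux

variable {I J : Type*} [Semigroup I] [Semigroup J]

/-- morphisms to inverse semigroups respect the inverse, in the form we need. -/
lemma rho_sv_eq (hI : IsInverseSemigroup I) (hJ : IsInverseSemigroup J) (ρ : I →ₙ* J)
    {a b : I} (h : ρ a = ρ b) : ρ (sv hI a) = ρ (sv hI b) := by
  have hA : ρ a * ρ (sv hI a) * ρ a = ρ a ∧ ρ (sv hI a) * ρ a * ρ (sv hI a) = ρ (sv hI a) := by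
    constructor
    · rw [← map_mul, ← map_mul, sv1]
    · rw [← map_mul, ← map_mul, sv2]
  have hB : ρ a * ρ (sv hI b) * ρ a = ρ a ∧ ρ (sv hI b) * ρ a * ρ (sv hI b) = ρ (sv hI b) := by
    rw [h]
    constructor
    · rw [← map_mul, ← map_mul, sv1]
    · rw [← map_mul, ← map_mul, sv2]
  exact (hJ (ρ a)).unique hA hB

/-- purity: if ρ a = ρ b then a * sv b is idempotent. -/
lemma pure_idem (hI : IsInverseSemigroup I) (ρ : I →ₙ* J)
    (hpure : ∀ a e : I, IsIdempotentElem e → ρ a = ρ e → IsIdempotentElem a)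
    {a b : I} (h : ρ a = ρ b) : (a * sv hI b) * (a * sv hI b) = a * sv hI b := by
  refine hpure (a * sv hI b) (b * sv hI b) (r_idem hI b) ?_
  rw [map_mul, map_mul, h]

/-- half of the key conjugation lemma. -/
lemma conj_half (hI : IsInverseSemigroup I) (ρ : I →ₙ* J)
    (hpure : ∀ a e : I, IsIdempotentElem e → ρ a = ρ e → IsIdempotentElem a)
    {a b e : I} (hab : ρ a = ρ b) (he : e * e = e) (heb : e * (sv hI b * b) = e) :
    a * (e * sv hI a) = (b * (e * sv hI b)) * (a * sv hI b) := by
  have hp : (a * sv hI b) * (a * sv hI b) = a * sv hI b := pure_idem hI ρ hpure hab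
  have hdb : (sv hI b * b) * (sv hI b * b) = sv hI b * b := d_idem hI b
  have hcomm : e * (sv hI b * b) = (sv hI b * b) * e := idem_comm hI he hdb
  have step1 : a * e = (a * sv hI b) * (b * e) := by
    calc a * e = a * (e * (sv hI b * b)) := by rw [heb]
      _ = a * ((sv hI b * b) * e) := by rw [hcomm]
      _ = (a * sv hI b) * (b * e) := by simp only [mul_assoc]
  have step2 : e * sv hI a = (e * sv hI b) * (a * sv hI b) := by
    have := congrArg (sv hI) step1
    rw [sv_mul, sv_mul, idem_sv hI he, sv_mul, idem_sv hI hp] at this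
    rw [this, idem_sv hI he]
  have hX : (b * (e * sv hI b)) * (b * (e * sv hI b)) = b * (e * sv hI b) :=
    conj_idem hI he heb
  have hcomm2 : (a * sv hI b) * (b * (e * sv hI b)) = (b * (e * sv hI b)) * (a * sv hI b) :=
    idem_comm hI hp hX
  calc a * (e * sv hI a)
      = a * ((e * e) * sv hI a) := by rw [he]
    _ = (a * e) * (e * sv hI a) := by simp only [mul_assoc]
    _ = ((a * sv hI b) * (b * e)) * ((e * sv hI b) * (a * sv hI b)) := by
        rw [step1, step2]
    _ = (a * sv hI b) * ((b * ((e * e) * sv hI b)) * (a * sv hI b)) := by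
        simp only [mul_assoc]
    _ = (a * sv hI b) * ((b * (e * sv hI b)) * (a * sv hI b)) := by rw [he]
    _ = ((a * sv hI b) * (b * (e * sv hI b))) * (a * sv hI b) := by
        simp only [mul_assoc]
    _ = ((b * (e * sv hI b)) * (a * sv hI b)) * (a * sv hI b) := by rw [hcomm2]
    _ = (b * (e * sv hI b)) * ((a * sv hI b) * (a * sv hI b)) := by
        simp only [mul_assoc]
    _ = (b * (e * sv hI b)) * (a * sv hI b) := by rw [hp]

/-- the key conjugation lemma (M): conjugation only depends on the ρ-image,
on idempotents below both domains. -/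
lemma conj_eq (hI : IsInverseSemigroup I) (ρ : I →ₙ* J)
    (hpure : ∀ a e : I, IsIdempotentElem e → ρ a = ρ e → IsIdempotentElem a)
    {a b e : I} (hab : ρ a = ρ b) (he : e * e = e)
    (hea : e * (sv hI a * a) = e) (heb : e * (sv hI b * b) = e) :
    a * (e * sv hI a) = b * (e * sv hI b) := by
  have hp : (a * sv hI b) * (a * sv hI b) = a * sv hI b := pure_idem hI ρ hpure hab
  have hq : b * sv hI a = a * sv hI b := by
    have h1 : sv hI (a * sv hI b) = b * sv hI a := by
      rw [sv_mul, sv_sv]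
    rw [← h1, idem_sv hI hp]
  have h1 : a * (e * sv hI a) = (b * (e * sv hI b)) * (a * sv hI b) :=
    conj_half hI ρ hpure hab he heb
  have h2 : b * (e * sv hI b) = (a * (e * sv hI a)) * (a * sv hI b) := by
    have := conj_half hI ρ hpure hab.symm he hea
    rw [hq] at this
    exact this
  calc a * (e * sv hI a)
      = (b * (e * sv hI b)) * (a * sv hI b) := h1
    _ = ((a * (e * sv hI a)) * (a * sv hI b)) * (a * sv hI b) := by rw [← h2]
    _ = (a * (e * sv hI a)) * ((a * sv hI b) * (a * sv hI b)) := by simp only [mul_assoc]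
    _ = (a * (e * sv hI a)) * (a * sv hI b) := by rw [hp]
    _ = b * (e * sv hI b) := h2.symm

/-- injectivity: an element is determined by its range idempotent and its ρ-image. -/
lemma eq_of_r_eq (hI : IsInverseSemigroup I) (ρ : I →ₙ* J)
    (hpure : ∀ a e : I, IsIdempotentElem e → ρ a = ρ e → IsIdempotentElem a)
    {a b : I} (hab : ρ a = ρ b) (hr : a * sv hI a = b * sv hI b) : a = b := by
  have hf : (sv hI a * b) * (sv hI a * b) = sv hI a * b := by
    refine hpure (sv hI a * b) (sv hI a * a) (d_idem hI a) ?_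
    rw [map_mul, map_mul, hab]
  have hsvf : sv hI b * a = sv hI a * b := by
    have h1 : sv hI (sv hI a * b) = sv hI b * a := by rw [sv_mul, sv_sv]
    rw [← h1, idem_sv hI hf]
  have ha : a = b * (sv hI a * b) := by
    calc a = (a * sv hI a) * a := by rw [sv1]
      _ = (b * sv hI b) * a := by rw [hr]
      _ = b * (sv hI b * a) := by rw [mul_assoc]
      _ = b * (sv hI a * b) := by rw [hsvf]
  have hb : b = a * (sv hI a * b) := by
    calc b = (b * sv hI b) * b := by rw [sv1]
      _ = (a * sv hI a) * b := by rw [hr]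
      _ = a * (sv hI a * b) := by rw [mul_assoc]
  calc a = b * (sv hI a * b) := ha
    _ = (a * (sv hI a * b)) * (sv hI a * b) := by rw [← hb]
    _ = a * ((sv hI a * b) * (sv hI a * b)) := by simp only [mul_assoc]
    _ = a * (sv hI a * b) := by rw [hf]
    _ = b := hb.symm

end InvSgAux

namespace InvSgAux

inductive IsWord {I : Type*} [Semigroup I] (U : Set I) : I → Prop
  | base {u : I} : u ∈ U → IsWord U u
  | step {a u : I} : IsWord U a → u ∈ U → IsWord U (a * u)

lemma isWord_mul {I : Type*} [Semigroup I] {U : Set I} {x y : I}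
    (hx : IsWord U x) (hy : IsWord U y) : IsWord U (x * y) := by
  induction hy with
  | base hu => exact .step hx hu
  | step ha hu ih => rw [← mul_assoc]; exact .step ih hu

lemma all_isWord {I : Type*} [Semigroup I] {U : Set I}
    (hU : Subsemigroup.closure U = ⊤) (a : I) : IsWord U a := by
  have ha : a ∈ Subsemigroup.closure U := by rw [hU]; trivial
  exact Subsemigroup.closure_induction (fun x h => .base h)
    (fun x y _ _ hx hy => isWord_mul hx hy) ha

variable {I J : Type*} [Semigroup I] [Semigroup J]

lemma r_mul (hI : IsInverseSemigroup I) (c u : I) :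
    (c * u) * sv hI (c * u) = c * ((u * sv hI u) * sv hI c) := by
  rw [sv_mul]; simp only [mul_assoc]

/-- KEY: the range idempotent of a word is determined by its finite "trace". -/
lemma key (hI : IsInverseSemigroup I) (hJ : IsInverseSemigroup J) (ρ : I →ₙ* J)
    (hpure : ∀ a e : I, IsIdempotentElem e → ρ a = ρ e → IsIdempotentElem a)
    (U : Set I) :
    ∀ a : I, IsWord U a → ∀ y : I, y * y = y →
    (∀ u : I, u ∈ U → (a * sv hI a) * (u * sv hI u) = a * sv hI a →
        y * (u * sv hI u) = y) →
    (∀ (g : J) (u : I), u ∈ U →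
        (∃ w : I, ρ w = g ∧
          (a * sv hI a) * (w * ((u * sv hI u) * sv hI w)) = a * sv hI a) →
        (∃ w : I, ρ w = g ∧ y * (w * ((u * sv hI u) * sv hI w)) = y)) →
    y * (a * sv hI a) = y := by
  intro a hw
  induction hw with
  | base hu => exact fun y hy H1 _ => H1 _ hu (r_idem hI _)
  | @step c u₀ hc hu ih =>
    intro y hy H1 H2
    have rml : (c * u₀) * sv hI (c * u₀) = c * ((u₀ * sv hI u₀) * sv hI c) :=
      r_mul hI c u₀
    have hE : (u₀ * sv hI u₀) * (u₀ * sv hI u₀) = u₀ * sv hI u₀ := r_idem hI u₀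
    have hlec : ((c * u₀) * sv hI (c * u₀)) * (c * sv hI c) = (c * u₀) * sv hI (c * u₀) := by
      rw [rml]; exact conj_le_r hI hE
    -- induction hypothesis applies since r(c*u₀) ≤ r(c)
    have hyrc : y * (c * sv hI c) = y := by
      refine ih y hy (fun u hu' h => H1 u hu' (le_trans' hlec h)) ?_
      rintro g u hu' ⟨w, hwρ, hle⟩
      exact H2 g u hu' ⟨w, hwρ, le_trans' hlec hle⟩
    -- the new trace pair, witnessed by the prefix c
    obtain ⟨w, hwρ, hyw⟩ := H2 (ρ c) u₀ hu ⟨c, rfl, by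
      rw [show c * ((u₀ * sv hI u₀) * sv hI c) = (c * u₀) * sv hI (c * u₀) from rml.symm]
      exact r_idem hI _⟩
    have hywr : y * (w * sv hI w) = y := le_trans' hyw (conj_le_r hI hE)
    -- conjugation lemma: sv c * (y * c) = sv w * (y * w)
    have hab : ρ (sv hI c) = ρ (sv hI w) := rho_sv_eq hI hJ ρ hwρ.symm
    have hz := conj_eq hI ρ hpure (a := sv hI c) (b := sv hI w) hab hy
      (by rw [sv_sv]; exact hyrc) (by rw [sv_sv]; exact hywr)
    rw [sv_sv, sv_sv] at hz
    -- z is below u₀ * sv u₀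
    have hy_w : y * w = y * (w * (u₀ * sv hI u₀)) := by
      calc y * w = (y * (w * ((u₀ * sv hI u₀) * sv hI w))) * w := by rw [hyw]
        _ = y * (w * ((u₀ * sv hI u₀) * (sv hI w * w))) := by simp only [mul_assoc]
        _ = y * (w * ((sv hI w * w) * (u₀ * sv hI u₀))) := by
            rw [idem_comm hI hE (d_idem hI w)]
        _ = y * ((w * (sv hI w * w)) * (u₀ * sv hI u₀)) := by simp only [mul_assoc]
        _ = y * (w * (u₀ * sv hI u₀)) := by
            rw [show w * (sv hI w * w) = w from by simpa [mul_assoc] using sv1 hI w]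
    have hzE : (sv hI c * (y * c)) * (u₀ * sv hI u₀) = sv hI c * (y * c) := by
      rw [hz]
      calc (sv hI w * (y * w)) * (u₀ * sv hI u₀)
          = sv hI w * (y * (w * (u₀ * sv hI u₀))) := by simp only [mul_assoc]
        _ = sv hI w * (y * w) := by rw [← hy_w]
    -- y = c * (z * sv c)
    have hrcy : (c * sv hI c) * y = y := by
      rw [idem_comm hI (r_idem hI c) hy]; exact hyrc
    have h_yzc : c * ((sv hI c * (y * c)) * sv hI c) = y := by
      calc c * ((sv hI c * (y * c)) * sv hI c)
          = (c * sv hI c) * (y * (c * sv hI c)) := by simp only [mul_assoc]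
        _ = (c * sv hI c) * y := by rw [hyrc]
        _ = y := hrcy
    have hZd : (sv hI c * (y * c)) * (sv hI c * c) = sv hI c * (y * c) := by
      calc (sv hI c * (y * c)) * (sv hI c * c)
          = sv hI c * (y * (c * (sv hI c * c))) := by simp only [mul_assoc]
        _ = sv hI c * (y * c) := by
            rw [show c * (sv hI c * c) = c from by simpa [mul_assoc] using sv1 hI c]
    rw [rml]
    calc y * (c * ((u₀ * sv hI u₀) * sv hI c))
        = (c * ((sv hI c * (y * c)) * sv hI c)) * (c * ((u₀ * sv hI u₀) * sv hI c)) := by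
          rw [h_yzc]
      _ = c * ((((sv hI c * (y * c)) * (sv hI c * c)) * (u₀ * sv hI u₀)) * sv hI c) := by
          simp only [mul_assoc]
      _ = c * (((sv hI c * (y * c)) * (u₀ * sv hI u₀)) * sv hI c) := by rw [hZd]
      _ = c * ((sv hI c * (y * c)) * sv hI c) := by rw [hzE]
      _ = y := h_yzc

end InvSgAux

open InvSgAux

theorem finite_of_idempotentPure_quotient {I J : Type*} [Semigroup I] [Semigroup J]
    [Finite J]
    (hI : IsInverseSemigroup I) (hJ : IsInverseSemigroup J)
    (hgen : ∃ U : Set I, U.Finite ∧ Subsemigroup.closure U = ⊤)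
    (ρ : I →ₙ* J) (hsurj : Function.Surjective ρ)
    (hpure : ∀ a e : I, IsIdempotentElem e → ρ a = ρ e → IsIdempotentElem a) :
    Finite I := by
  classical
  obtain ⟨U, hUfin, hUtop⟩ := hgen
  haveI : Finite ↥U := hUfin.to_subtype
  haveI := Fintype.ofFinite J
  have word : ∀ a : I, IsWord U a := all_isWord hUtop
  -- the trace predicate
  let SP : I → Option J × ↥U → Prop := fun x q =>
    q.1.elim (x * ((q.2 : I) * sv hI (q.2 : I)) = x)
      (fun g => ∃ w : I, ρ w = g ∧
        x * (w * (((q.2 : I) * sv hI (q.2 : I)) * sv hI w)) = x)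
  let Enc : I → J × (Option J × ↥U → Bool) := fun a =>
    (ρ a, fun q => decide (SP (a * sv hI a) q))
  have hinj : Function.Injective Enc := by
    intro a b hab
    have h1 : ρ a = ρ b := congrArg Prod.fst hab
    have h2 : ∀ q : Option J × ↥U, SP (a * sv hI a) q ↔ SP (b * sv hI b) q := by
      intro q
      have := congrFun (congrArg Prod.snd hab) q
      exact decide_eq_decide.mp this
    have hba : (b * sv hI b) * (a * sv hI a) = b * sv hI b := by
      refine key hI hJ ρ hpure U a (word a) (b * sv hI b) (r_idem hI b) ?_ ?_
      · intro u hu hle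
        exact (h2 (none, ⟨u, hu⟩)).mp hle
      · intro g u hu hex
        exact (h2 (some g, ⟨u, hu⟩)).mp hex
    have hab' : (a * sv hI a) * (b * sv hI b) = a * sv hI a := by
      refine key hI hJ ρ hpure U b (word b) (a * sv hI a) (r_idem hI a) ?_ ?_
      · intro u hu hle
        exact (h2 (none, ⟨u, hu⟩)).mpr hle
      · intro g u hu hex
        exact (h2 (some g, ⟨u, hu⟩)).mpr hex
    have hr : a * sv hI a = b * sv hI b := by
      calc a * sv hI a = (a * sv hI a) * (b * sv hI b) := hab'.symm
        _ = (b * sv hI b) * (a * sv hI a) := idem_comm hI (r_idem hI a) (r_idem hI b)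
        _ = b * sv hI b := hba
    exact eq_of_r_eq hI ρ hpure h1 hr
  exact Finite.of_injective Enc hinj
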